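/- There exists an integer k₀ such that for all integers k ≥ k₀, every real h with 0 < h ≤ (2k)^{−2k²}, and every (y_0, …, y_k) ∈ ℝ^{k+1}, | det((p_1(y_i, x_j))_{i,j=0}^{k}) / det((p_2(x_i, x_j))_{i,j=0}^{k}) − ( ∫_{[−h,h]^{k+1}} det((p_1(y_i, x_j + s_j))_{i,j=0}^{k}) ds_0 ⋯ ds_k ) / ( ∫_{[−h,h]^{k+1}} det((p_2(x_i, x_j + s_j))_{i,j=0}^{k}) ds_0 ⋯ ds_k ) | ≤ 1/k. -/

import Mathlib

open MeasureTheory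

/-- The one-dimensional heat kernel `p_t(a,b)`. -/
noncomputable def heatK (t a b : ℝ) : ℝ :=
    (Real.sqrt (2 * Real.pi * t))⁻¹ * Real.exp (-(a - b) ^ 2 / (2 * t))

/-- The equally spaced starting points `x_i = (2i - k)/k`. -/
noncomputable def xPt (k : ℕ) (i : Fin (k + 1)) : ℝ := (2 * (i : ℝ) - k) / k


open Finset

lemma abs_prod_sub_prod_le {ι : Type*} (s : Finset ι) (f g : ι → ℝ)
    (hf : ∀ i ∈ s, |f i| ≤ 1) (hg : ∀ i ∈ s, |g i| ≤ 1) :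
    |∏ i ∈ s, f i - ∏ i ∈ s, g i| ≤ ∑ i ∈ s, |f i - g i| := by
  induction s using Finset.cons_induction with
  | empty => simp
  | cons a s ha ih =>
    rw [Finset.prod_cons, Finset.prod_cons, Finset.sum_cons]
    have hfs : |∏ i ∈ s, f i| ≤ 1 := by
      rw [Finset.abs_prod]
      exact Finset.prod_le_one (fun i _ => abs_nonneg _)
        (fun i hi => hf i (Finset.mem_cons_of_mem hi))
    have hga : |g a| ≤ 1 := hg a (Finset.mem_cons_self a s)
    have key : f a * ∏ i ∈ s, f i - g a * ∏ i ∈ s, g i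
        = (f a - g a) * ∏ i ∈ s, f i + g a * (∏ i ∈ s, f i - ∏ i ∈ s, g i) := by ring
    rw [key]
    calc |(f a - g a) * ∏ i ∈ s, f i + g a * (∏ i ∈ s, f i - ∏ i ∈ s, g i)|
        ≤ |(f a - g a) * ∏ i ∈ s, f i| + |g a * (∏ i ∈ s, f i - ∏ i ∈ s, g i)| := abs_add_le _ _
      _ ≤ |f a - g a| * 1 + 1 * ∑ i ∈ s, |f i - g i| := by
          rw [abs_mul, abs_mul]
          gcongr
          · exact ih (fun i hi => hf i (Finset.mem_cons_of_mem hi))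
              (fun i hi => hg i (Finset.mem_cons_of_mem hi))
      _ = |f a - g a| + ∑ i ∈ s, |f i - g i| := by ring

lemma abs_det_sub_det_le {n : ℕ} (A B : Matrix (Fin n) (Fin n) ℝ)
    (hA : ∀ i j, |A i j| ≤ 1) (hB : ∀ i j, |B i j| ≤ 1)
    (e : ℝ) (hAB : ∀ i j, |A i j - B i j| ≤ e) :
    |A.det - B.det| ≤ (n.factorial : ℝ) * (n * e) := by
  rw [Matrix.det_apply', Matrix.det_apply', ← Finset.sum_sub_distrib]
  calc |∑ σ : Equiv.Perm (Fin n), (((Equiv.Perm.sign σ : ℤ) : ℝ) * ∏ i, A (σ i) i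
          - ((Equiv.Perm.sign σ : ℤ) : ℝ) * ∏ i, B (σ i) i)|
      ≤ ∑ σ : Equiv.Perm (Fin n), |((Equiv.Perm.sign σ : ℤ) : ℝ) * ∏ i, A (σ i) i
          - ((Equiv.Perm.sign σ : ℤ) : ℝ) * ∏ i, B (σ i) i| := Finset.abs_sum_le_sum_abs _ _
    _ ≤ ∑ _σ : Equiv.Perm (Fin n), (n : ℝ) * e := by
        apply Finset.sum_le_sum
        intro σ _
        have hsgn : |((Equiv.Perm.sign σ : ℤ) : ℝ)| = 1 := by
          rcases Int.units_eq_one_or (Equiv.Perm.sign σ) with h | h <;> simp [h]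
        rw [← mul_sub, abs_mul, hsgn, one_mul]
        calc |(∏ i, A (σ i) i) - (∏ i, B (σ i) i)|
            ≤ ∑ i, |A (σ i) i - B (σ i) i| :=
              abs_prod_sub_prod_le _ _ _ (fun i _ => hA _ _) (fun i _ => hB _ _)
          _ ≤ ∑ _i : Fin n, e := Finset.sum_le_sum (fun i _ => hAB _ _)
          _ = (n : ℝ) * e := by simp [mul_comm]
    _ = (n.factorial : ℝ) * ((n : ℝ) * e) := by
        rw [Finset.sum_const, Finset.card_univ, Fintype.card_perm, Fintype.card_fin,
          nsmul_eq_mul]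



lemma sqrt_two_pi_t_ge_one {t : ℝ} (ht : 1 ≤ t) : 1 ≤ Real.sqrt (2 * Real.pi * t) := by
  rw [show (1:ℝ) = Real.sqrt 1 by simp]
  apply Real.sqrt_le_sqrt
  nlinarith [Real.pi_gt_three]

lemma heatK_nonneg (t a b : ℝ) : 0 ≤ heatK t a b := by
  unfold heatK; positivity

lemma heatK_le_one {t : ℝ} (ht : 1 ≤ t) (a b : ℝ) : heatK t a b ≤ 1 := by
  unfold heatK
  have h1 := sqrt_two_pi_t_ge_one ht
  have h2 : Real.exp (-(a - b) ^ 2 / (2 * t)) ≤ 1 := by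
    rw [Real.exp_le_one_iff]
    have h3 : 0 < 2 * t := by linarith
    apply div_nonpos_of_nonpos_of_nonneg
    · simp [sq_nonneg]
    · positivity
  calc (Real.sqrt (2 * Real.pi * t))⁻¹ * Real.exp (-(a - b) ^ 2 / (2 * t))
      ≤ 1 * 1 := by
        apply mul_le_mul _ h2 (by positivity) (by norm_num)
        rw [inv_le_one_iff₀]; right; exact h1
    _ = 1 := by norm_num

lemma gauss_deriv_bound {t : ℝ} (ht : 1 ≤ t) (z : ℝ) :
    |Real.exp (-z ^ 2 / (2 * t)) * (z / t)| ≤ 1 := by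
  have htpos : (0:ℝ) < t := by linarith
  have key : t + z ^ 2 / 2 ≤ Real.exp (z ^ 2 / (2 * t)) * t := by
    have hb := Real.add_one_le_exp (z ^ 2 / (2 * t))
    have he : t + z ^ 2 / 2 = (z ^ 2 / (2 * t) + 1) * t := by field_simp; ring
    rw [he]
    nlinarith
  have habs : |z| ≤ t + z ^ 2 / 2 := by
    have h1 : 0 ≤ z ^ 2 - 2 * |z| + 1 := by
      have h2 := sq_nonneg (|z| - 1)
      have h3 := sq_abs z
      nlinarith
    linarith
  rw [abs_mul, Real.abs_exp, abs_div, abs_of_pos htpos,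
    show -z ^ 2 / (2 * t) = -(z ^ 2 / (2 * t)) by ring, Real.exp_neg,
    inv_mul_le_iff₀ (Real.exp_pos _), div_le_iff₀ htpos]
  nlinarith

lemma heatK_lipschitz {t : ℝ} (ht : 1 ≤ t) (a b b' : ℝ) :
    |heatK t a b - heatK t a b'| ≤ |b - b'| := by
  have htpos : (0:ℝ) < t := by linarith
  set f : ℝ → ℝ := fun y => Real.exp (-(a - y) ^ 2 / (2 * t)) with hf
  set f' : ℝ → ℝ := fun y => Real.exp (-(a - y) ^ 2 / (2 * t)) * ((a - y) / t) with hf'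
  have hderiv : ∀ y : ℝ, HasDerivAt f (f' y) y := by
    intro y
    have h0 : HasDerivAt (fun y : ℝ => a - y) (-1) y := (hasDerivAt_id y).const_sub a
    have h1 : HasDerivAt (fun y : ℝ => (a - y) ^ 2) (2 * (a - y) ^ 1 * (-1)) y := h0.pow 2
    have h2 : HasDerivAt (fun y : ℝ => -(a - y) ^ 2 / (2 * t))
        (-(2 * (a - y) ^ 1 * (-1)) / (2 * t)) y := h1.neg.div_const (2 * t)
    have h3 := h2.exp
    convert h3 using 1
    simp only [hf']
    field_simp
  have hbound : ∀ y : ℝ, ‖f' y‖ ≤ 1 := by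
    intro y
    simp only [hf', Real.norm_eq_abs]
    exact gauss_deriv_bound ht (a - y)
  have hlip : ∀ u v : ℝ, |f u - f v| ≤ |u - v| := by
    intro u v
    have := Convex.norm_image_sub_le_of_norm_hasDerivWithin_le
      (f := f) (f' := f') (s := Set.univ)
      (fun x _ => (hderiv x).hasDerivWithinAt) (fun x _ => hbound x) convex_univ
      (Set.mem_univ v) (Set.mem_univ u)
    simpa using this
  have hc0 : (0:ℝ) ≤ (Real.sqrt (2 * Real.pi * t))⁻¹ := by positivity
  have hc1 : (Real.sqrt (2 * Real.pi * t))⁻¹ ≤ 1 := by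
    rw [inv_le_one_iff₀]; right; exact sqrt_two_pi_t_ge_one ht
  unfold heatK
  rw [← mul_sub, abs_mul, abs_of_nonneg hc0]
  calc (Real.sqrt (2 * Real.pi * t))⁻¹ * |f b - f b'| ≤ 1 * |b - b'| := by
        apply mul_le_mul hc1 (hlip b b') (abs_nonneg _) (by norm_num)
    _ = |b - b'| := one_mul _




lemma sum_card_Ioi (k : ℕ) : 2 * (∑ i : Fin (k + 1), (Finset.Ioi i).card) = k ^ 2 + k := by
  have h1 : ∀ i : Fin (k + 1), (Finset.Ioi i).card = k - (i : ℕ) := by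
    intro i; rw [Fin.card_Ioi]; omega
  simp_rw [h1]
  rw [Fin.sum_univ_eq_sum_range (fun i => k - i) (k + 1)]
  have h2 := Finset.sum_range_reflect (fun j => j) (k + 1)
  simp only [Nat.add_sub_cancel] at h2
  have h3 := Finset.sum_range_id_mul_two (k + 1)
  have h4 : ∑ j ∈ Finset.range (k + 1), (k - j) = ∑ j ∈ Finset.range (k + 1), j := by
    rw [← h2]
  rw [h4]
  have h5 : (∑ j ∈ Finset.range (k + 1), j) * 2 = (k + 1) * k := h3
  nlinarith [h5]

lemma abs_xPt_le_one {k : ℕ} (hk : 1 ≤ k) (i : Fin (k + 1)) : |xPt k i| ≤ 1 := by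
  have hk0 : (0:ℝ) < k := by exact_mod_cast hk
  have hi0 : (0:ℝ) ≤ (i : ℝ) := by positivity
  have hik : ((i : ℕ) : ℝ) ≤ k := by exact_mod_cast Fin.is_le i
  unfold xPt
  rw [abs_div, abs_of_pos hk0, div_le_one hk0, abs_le]
  constructor <;> linarith

lemma sqrt_4pi_le_4 : Real.sqrt (2 * Real.pi * 2) ≤ 4 := by
  have h1 : Real.sqrt (2 * Real.pi * 2) ≤ Real.sqrt 16 :=
    Real.sqrt_le_sqrt (by nlinarith [Real.pi_le_four])
  have h2 : Real.sqrt 16 = 4 := by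
    rw [show (16:ℝ) = 4 ^ 2 by norm_num, Real.sqrt_sq (by norm_num : (0:ℝ) ≤ 4)]
  linarith

lemma exp_neg_one_ge : (4:ℝ)⁻¹ ≤ Real.exp (-1) := by
  rw [Real.exp_neg]
  exact inv_anti₀ (Real.exp_pos 1) (by nlinarith [Real.exp_one_lt_d9])

lemma det_heat2_ge {k : ℕ} (hk : 1 ≤ k) :
    ((16:ℝ)⁻¹) ^ (k + 1) * ((2 * (k:ℝ) ^ 2)⁻¹) ^ (∑ i : Fin (k + 1), (Finset.Ioi i).card)
        * ((16:ℝ)⁻¹) ^ (k + 1)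
      ≤ (Matrix.of fun i j : Fin (k + 1) => heatK 2 (xPt k i) (xPt k j)).det := by
  have hk0 : (0:ℝ) < k := by exact_mod_cast hk
  have hk1 : (1:ℝ) ≤ k := by exact_mod_cast hk
  set r : Fin (k + 1) → ℝ := fun i =>
    (Real.sqrt (2 * Real.pi * 2))⁻¹ * Real.exp (-(xPt k i) ^ 2 / 4 - xPt k i / 2) with hr_def
  set c : Fin (k + 1) → ℝ := fun j => Real.exp (-(xPt k j) ^ 2 / 4) with hc_def
  set q : Fin (k + 1) → ℝ := fun i => Real.exp (xPt k i / k) with hq_def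
  have hM : (Matrix.of fun i j : Fin (k + 1) => heatK 2 (xPt k i) (xPt k j))
      = Matrix.diagonal r * Matrix.vandermonde q * Matrix.diagonal c := by
    ext i j
    rw [Matrix.mul_diagonal, Matrix.diagonal_mul]
    simp only [Matrix.of_apply, Matrix.vandermonde, Matrix.of_apply, hr_def, hc_def, hq_def]
    unfold heatK
    rw [← Real.exp_nat_mul, mul_assoc ((Real.sqrt (2 * Real.pi * 2))⁻¹), ← Real.exp_add,
      mul_assoc ((Real.sqrt (2 * Real.pi * 2))⁻¹), ← Real.exp_add]
    congr 1
    unfold xPt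
    field_simp
    ring
  rw [hM, Matrix.det_mul, Matrix.det_mul, Matrix.det_diagonal, Matrix.det_diagonal,
    Matrix.det_vandermonde]
  have hr_lb : ∀ i, (16:ℝ)⁻¹ ≤ r i := by
    intro i
    have hx := abs_xPt_le_one hk i
    have hx1 := abs_le.mp hx
    have he : Real.exp (-1) ≤ Real.exp (-(xPt k i) ^ 2 / 4 - xPt k i / 2) := by
      apply Real.exp_le_exp.mpr
      nlinarith [sq_abs (xPt k i), sq_nonneg (xPt k i)]
    have hs : (4:ℝ)⁻¹ ≤ (Real.sqrt (2 * Real.pi * 2))⁻¹ := by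
      apply inv_anti₀ _ sqrt_4pi_le_4
      positivity
    calc (16:ℝ)⁻¹ = 4⁻¹ * 4⁻¹ := by norm_num
      _ ≤ (Real.sqrt (2 * Real.pi * 2))⁻¹ * Real.exp (-(xPt k i) ^ 2 / 4 - xPt k i / 2) := by
          apply mul_le_mul hs (le_trans exp_neg_one_ge he) (by norm_num) (by positivity)
  have hc_lb : ∀ j, (16:ℝ)⁻¹ ≤ c j := by
    intro j
    have hx := abs_xPt_le_one hk j
    have hx1 := abs_le.mp hx
    have he : Real.exp (-1) ≤ Real.exp (-(xPt k j) ^ 2 / 4) := by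
      apply Real.exp_le_exp.mpr
      nlinarith [sq_abs (xPt k j)]
    calc (16:ℝ)⁻¹ ≤ 4⁻¹ := by norm_num
      _ ≤ Real.exp (-(xPt k j) ^ 2 / 4) := le_trans exp_neg_one_ge he
  have hq_lb : ∀ i j : Fin (k + 1), i < j → (2 * (k:ℝ) ^ 2)⁻¹ ≤ q j - q i := by
    intro i j hij
    have hij' : ((i : ℕ) : ℝ) + 1 ≤ ((j : ℕ) : ℝ) := by exact_mod_cast hij
    have hd : 2 / (k:ℝ) ^ 2 ≤ (xPt k j - xPt k i) / k := by
      unfold xPt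
      rw [div_sub_div_same, div_div]
      rw [div_le_div_iff₀ (by positivity) (by positivity)]
      nlinarith
    have hxi : -1 ≤ xPt k i / k := by
      have hx1 := (abs_le.mp (abs_xPt_le_one hk i)).1
      rw [neg_le, ← neg_div, div_le_one hk0]
      nlinarith
    have hfac : q j - q i = q i * (Real.exp ((xPt k j - xPt k i) / k) - 1) := by
      simp only [hq_def]
      rw [mul_sub, mul_one, ← Real.exp_add]
      congr 2
      ring
    have h1 : (xPt k j - xPt k i) / k ≤ Real.exp ((xPt k j - xPt k i) / k) - 1 := by
      linarith [Real.add_one_le_exp ((xPt k j - xPt k i) / k)]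
    have hqi : (4:ℝ)⁻¹ ≤ q i := by
      refine le_trans exp_neg_one_ge (Real.exp_le_exp.mpr hxi)
    rw [hfac]
    calc (2 * (k:ℝ) ^ 2)⁻¹ = 4⁻¹ * (2 / (k:ℝ) ^ 2) := by
          field_simp
          ring
      _ ≤ q i * (Real.exp ((xPt k j - xPt k i) / k) - 1) := by
          apply mul_le_mul hqi (le_trans hd h1) (by positivity) (by positivity)
  have hPr : ((16:ℝ)⁻¹) ^ (k + 1) ≤ ∏ i, r i := by
    calc ((16:ℝ)⁻¹) ^ (k + 1) = ∏ _i : Fin (k + 1), (16:ℝ)⁻¹ := by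
          rw [Finset.prod_const, Finset.card_univ, Fintype.card_fin]
      _ ≤ ∏ i, r i := Finset.prod_le_prod (fun _ _ => by norm_num) (fun i _ => hr_lb i)
  have hPc : ((16:ℝ)⁻¹) ^ (k + 1) ≤ ∏ j, c j := by
    calc ((16:ℝ)⁻¹) ^ (k + 1) = ∏ _j : Fin (k + 1), (16:ℝ)⁻¹ := by
          rw [Finset.prod_const, Finset.card_univ, Fintype.card_fin]
      _ ≤ ∏ j, c j := Finset.prod_le_prod (fun _ _ => by norm_num) (fun j _ => hc_lb j)
  have hPv : ((2 * (k:ℝ) ^ 2)⁻¹) ^ (∑ i : Fin (k + 1), (Finset.Ioi i).card)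
      ≤ ∏ i, ∏ j ∈ Finset.Ioi i, (q j - q i) := by
    have hstep : ∀ i : Fin (k + 1),
        ((2 * (k:ℝ) ^ 2)⁻¹) ^ (Finset.Ioi i).card ≤ ∏ j ∈ Finset.Ioi i, (q j - q i) := by
      intro i
      calc ((2 * (k:ℝ) ^ 2)⁻¹) ^ (Finset.Ioi i).card
          = ∏ _j ∈ Finset.Ioi i, (2 * (k:ℝ) ^ 2)⁻¹ := (Finset.prod_const _).symm
        _ ≤ ∏ j ∈ Finset.Ioi i, (q j - q i) :=
            Finset.prod_le_prod (fun _ _ => by positivity)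
              (fun j hj => hq_lb i j (Finset.mem_Ioi.mp hj))
    calc ((2 * (k:ℝ) ^ 2)⁻¹) ^ (∑ i : Fin (k + 1), (Finset.Ioi i).card)
        = ∏ i : Fin (k + 1), ((2 * (k:ℝ) ^ 2)⁻¹) ^ (Finset.Ioi i).card := by
          rw [Finset.prod_pow_eq_pow_sum]
      _ ≤ ∏ i, ∏ j ∈ Finset.Ioi i, (q j - q i) :=
          Finset.prod_le_prod (fun i _ => by positivity) (fun i _ => hstep i)
  have h0r : (0:ℝ) ≤ ∏ i, r i := le_trans (by positivity) hPr
  have h0v : (0:ℝ) ≤ ∏ i, ∏ j ∈ Finset.Ioi i, (q j - q i) := le_trans (by positivity) hPv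
  apply mul_le_mul (mul_le_mul hPr hPv (by positivity) h0r) hPc (by positivity)
    (mul_nonneg h0r h0v)


lemma two_k_pow_nine_le (k : ℕ) (hk : 200 ≤ k) : (2 * k) ^ 9 ≤ 2 ^ (k - 1) := by
  induction k, hk using Nat.le_induction with
  | base => norm_num
  | succ k hk ih =>
    have h1 : 100 * (k + 1) ≤ 101 * k := by omega
    have h2 : (100 * (k + 1)) ^ 9 ≤ (101 * k) ^ 9 := Nat.pow_le_pow_left h1 9
    rw [mul_pow, mul_pow] at h2
    have h3 : (101:ℕ) ^ 9 * k ^ 9 ≤ 100 ^ 9 * (2 * k ^ 9) := by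
      have : (101:ℕ) ^ 9 ≤ 2 * 100 ^ 9 := by norm_num
      calc (101:ℕ) ^ 9 * k ^ 9 ≤ 2 * 100 ^ 9 * k ^ 9 := Nat.mul_le_mul_right _ this
        _ = 100 ^ 9 * (2 * k ^ 9) := by ring
    have h4 : (k + 1) ^ 9 ≤ 2 * k ^ 9 :=
      Nat.le_of_mul_le_mul_left (le_trans h2 h3) (by norm_num)
    calc (2 * (k + 1)) ^ 9 = 2 ^ 9 * (k + 1) ^ 9 := by rw [mul_pow]
      _ ≤ 2 ^ 9 * (2 * k ^ 9) := Nat.mul_le_mul_left _ h4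
      _ = 2 * (2 * k) ^ 9 := by rw [mul_pow]; ring
      _ ≤ 2 * 2 ^ (k - 1) := Nat.mul_le_mul_left _ ih
      _ = 2 ^ (k - 1 + 1) := by rw [pow_succ]; ring
      _ = 2 ^ (k + 1 - 1) := by congr 1; omega

lemma master_ineq (k C : ℕ) (hk : 200 ≤ k) (hC : 2 * C ≤ k ^ 2 + k) :
    4 * k * ((Nat.factorial (k + 1)) * (k + 1)) ^ 2 * 16 ^ (4 * (k + 1))
      * (2 * k ^ 2) ^ (2 * C) ≤ (2 * k) ^ (2 * k ^ 2) := by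
  have hk1 : 1 ≤ k := by omega
  have h2k : 1 ≤ 2 * k := by omega
  -- step 1 : the head is at most (2k)^(8k+10)
  have hhead : 4 * k * ((Nat.factorial (k + 1)) * (k + 1)) ^ 2 * 16 ^ (4 * (k + 1)) * k ^ (2 * k)
      ≤ (2 * k) ^ (8 * k + 10) := by
    have e1 : 4 * k ≤ (2 * k) ^ 2 := by nlinarith
    have e2 : ((Nat.factorial (k + 1)) * (k + 1)) ^ 2 ≤ (2 * k) ^ (2 * k + 4) := by
      have f1 : Nat.factorial (k + 1) ≤ (k + 1) ^ (k + 1) := Nat.factorial_le_pow (k + 1)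
      have f2 : (Nat.factorial (k + 1)) * (k + 1) ≤ (k + 1) ^ (k + 2) := by
        calc (Nat.factorial (k + 1)) * (k + 1) ≤ (k + 1) ^ (k + 1) * (k + 1) :=
              Nat.mul_le_mul_right _ f1
          _ = (k + 1) ^ (k + 2) := by rw [← pow_succ]
      have f3 : (k + 1) ^ (k + 2) ≤ (2 * k) ^ (k + 2) :=
        Nat.pow_le_pow_left (by omega) _
      calc ((Nat.factorial (k + 1)) * (k + 1)) ^ 2 ≤ ((2 * k) ^ (k + 2)) ^ 2 :=
            Nat.pow_le_pow_left (le_trans f2 f3) 2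
        _ = (2 * k) ^ (2 * k + 4) := by rw [← pow_mul]; congr 1; ring
    have e3 : (16:ℕ) ^ (4 * (k + 1)) ≤ (2 * k) ^ (4 * k + 4) := by
      have : (16:ℕ) ≤ 2 * k := by omega
      calc (16:ℕ) ^ (4 * (k + 1)) ≤ (2 * k) ^ (4 * (k + 1)) := Nat.pow_le_pow_left this _
        _ = (2 * k) ^ (4 * k + 4) := by congr 1
    have e4 : k ^ (2 * k) ≤ (2 * k) ^ (2 * k) := Nat.pow_le_pow_left (by omega) _
    calc 4 * k * ((Nat.factorial (k + 1)) * (k + 1)) ^ 2 * 16 ^ (4 * (k + 1)) * k ^ (2 * k)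
        ≤ (2 * k) ^ 2 * ((2 * k) ^ (2 * k + 4)) * ((2 * k) ^ (4 * k + 4)) * ((2 * k) ^ (2 * k)) := by
          exact Nat.mul_le_mul (Nat.mul_le_mul (Nat.mul_le_mul e1 e2) e3) e4
      _ = (2 * k) ^ (2 + (2 * k + 4) + (4 * k + 4) + 2 * k) := by
          rw [← pow_add, ← pow_add, ← pow_add]
      _ = (2 * k) ^ (8 * k + 10) := by congr 1; ring
  have hmid : (2 * k) ^ (8 * k + 10) ≤ 2 ^ (k ^ 2 - k) := by
    calc (2 * k) ^ (8 * k + 10) ≤ (2 * k) ^ (9 * k) := Nat.pow_le_pow_right (by omega) (by omega)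
      _ = ((2 * k) ^ 9) ^ k := by rw [← pow_mul]
      _ ≤ (2 ^ (k - 1)) ^ k := Nat.pow_le_pow_left (two_k_pow_nine_le k hk) k
      _ = 2 ^ ((k - 1) * k) := by rw [← pow_mul]
      _ = 2 ^ (k ^ 2 - k) := by
          congr 1
          rw [Nat.sub_mul, one_mul, ← pow_two]
  -- step 2
  have hsplit : (2 * k ^ 2) ^ (2 * C) ≤ 2 ^ (k ^ 2 + k) * k ^ (2 * k ^ 2 + 2 * k) := by
    calc (2 * k ^ 2) ^ (2 * C) ≤ (2 * k ^ 2) ^ (k ^ 2 + k) :=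
          Nat.pow_le_pow_right (by positivity) hC
      _ = 2 ^ (k ^ 2 + k) * (k ^ 2) ^ (k ^ 2 + k) := by rw [mul_pow]
      _ = 2 ^ (k ^ 2 + k) * k ^ (2 * k ^ 2 + 2 * k) := by
          rw [← pow_mul]; congr 1; ring
  have hkk : k ≤ k ^ 2 := by nlinarith
  calc 4 * k * ((Nat.factorial (k + 1)) * (k + 1)) ^ 2 * 16 ^ (4 * (k + 1))
        * (2 * k ^ 2) ^ (2 * C)
      ≤ 4 * k * ((Nat.factorial (k + 1)) * (k + 1)) ^ 2 * 16 ^ (4 * (k + 1))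
        * (2 ^ (k ^ 2 + k) * k ^ (2 * k ^ 2 + 2 * k)) :=
        Nat.mul_le_mul_left _ hsplit
    _ = (4 * k * ((Nat.factorial (k + 1)) * (k + 1)) ^ 2 * 16 ^ (4 * (k + 1)) * k ^ (2 * k))
        * (2 ^ (k ^ 2 + k) * k ^ (2 * k ^ 2)) := by
        rw [show 2 * k ^ 2 + 2 * k = 2 * k + 2 * k ^ 2 by ring, pow_add]
        ring
    _ ≤ (2 ^ (k ^ 2 - k)) * (2 ^ (k ^ 2 + k) * k ^ (2 * k ^ 2)) :=
        Nat.mul_le_mul_right _ (le_trans hhead hmid)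
    _ = 2 ^ ((k ^ 2 - k) + (k ^ 2 + k)) * k ^ (2 * k ^ 2) := by rw [← mul_assoc, ← pow_add]
    _ = 2 ^ (2 * k ^ 2) * k ^ (2 * k ^ 2) := by
        congr 2; omega
    _ = (2 * k) ^ (2 * k ^ 2) := by rw [← mul_pow]


open MeasureTheory

lemma heatK_continuous (t a : ℝ) : Continuous fun b => heatK t a b := by
  unfold heatK
  exact continuous_const.mul
    ((((continuous_const.sub continuous_id).pow 2).neg.div_const (2 * t)).rexp)

set_option maxHeartbeats 1000000 in
theorem det_ratio_average_bound :
    ∃ k₀ : ℕ, ∀ k : ℕ, k₀ ≤ k → ∀ h : ℝ, 0 < h → h ≤ ((2 * (k : ℝ)) ^ (2 * k ^ 2))⁻¹ →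
      ∀ y : Fin (k + 1) → ℝ,
        |Matrix.det (Matrix.of fun i j : Fin (k + 1) => heatK 1 (y i) (xPt k j)) /
            Matrix.det (Matrix.of fun i j : Fin (k + 1) => heatK 2 (xPt k i) (xPt k j)) -
          (∫ s in (Set.Icc (fun _ => -h) (fun _ => h) : Set (Fin (k + 1) → ℝ)),
              Matrix.det (Matrix.of fun i j : Fin (k + 1) => heatK 1 (y i) (xPt k j + s j))) /
            (∫ s in (Set.Icc (fun _ => -h) (fun _ => h) : Set (Fin (k + 1) → ℝ)),
              Matrix.det (Matrix.of fun i j : Fin (k + 1) =>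
                heatK 2 (xPt k i) (xPt k j + s j)))| ≤ 1 / (k : ℝ) := by
  refine ⟨200, fun k hk h hh hhle y => ?_⟩
  have hk1 : 1 ≤ k := by omega
  have hk0 : (0:ℝ) < k := by exact_mod_cast hk1
  have hk200 : (200:ℝ) ≤ k := by exact_mod_cast hk
  set S : Set (Fin (k + 1) → ℝ) := Set.Icc (fun _ => -h) (fun _ => h) with hS_def
  set C : ℕ := ∑ i : Fin (k + 1), (Finset.Ioi i).card with hC_def
  set M : ℝ := ((k + 1).factorial : ℝ) * (k + 1) with hM_def
  set β : ℝ := ((16:ℝ)⁻¹) ^ (k + 1) * ((2 * (k:ℝ) ^ 2)⁻¹) ^ C * ((16:ℝ)⁻¹) ^ (k + 1)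
    with hβ_def
  set a : ℝ := Matrix.det (Matrix.of fun i j : Fin (k + 1) => heatK 1 (y i) (xPt k j))
    with ha_def
  set b : ℝ := Matrix.det (Matrix.of fun i j : Fin (k + 1) => heatK 2 (xPt k i) (xPt k j))
    with hb_def
  set F : (Fin (k + 1) → ℝ) → ℝ := fun s =>
    Matrix.det (Matrix.of fun i j : Fin (k + 1) => heatK 1 (y i) (xPt k j + s j)) with hF_def
  set G : (Fin (k + 1) → ℝ) → ℝ := fun s =>
    Matrix.det (Matrix.of fun i j : Fin (k + 1) => heatK 2 (xPt k i) (xPt k j + s j)) with hG_def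
  clear_value S C M β a b F G
  have hβpos : 0 < β := by rw [hβ_def]; positivity
  have hβ1 : β ≤ 1 := by
    rw [hβ_def]
    have e1 : ((16:ℝ)⁻¹) ^ (k + 1) ≤ 1 := pow_le_one₀ (by norm_num) (by norm_num)
    have e2 : ((2 * (k:ℝ) ^ 2)⁻¹) ^ C ≤ 1 := by
      apply pow_le_one₀ (by positivity)
      rw [inv_le_one_iff₀]; right; nlinarith
    calc ((16:ℝ)⁻¹) ^ (k + 1) * ((2 * (k:ℝ) ^ 2)⁻¹) ^ C * ((16:ℝ)⁻¹) ^ (k + 1)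
        ≤ 1 * 1 * 1 := by
          apply mul_le_mul (mul_le_mul e1 e2 (by positivity) (by positivity)) e1
            (by positivity)
          norm_num
      _ = 1 := by norm_num
  have hM1 : (1:ℝ) ≤ M := by
    rw [hM_def]
    have : (1:ℕ) ≤ (k + 1).factorial * (k + 1) :=
      Nat.one_le_iff_ne_zero.mpr (by positivity)
    exact_mod_cast this
  -- the key master inequality
  have hmaster : 4 * (k:ℝ) * M ^ 2 * h ≤ β ^ 2 := by
    have hCle : 2 * C ≤ k ^ 2 + k := by rw [hC_def]; exact le_of_eq (sum_card_Ioi k)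
    have hnat := master_ineq k C hk hCle
    have hreal : 4 * (k:ℝ) * M ^ 2 * 16 ^ (4 * (k + 1)) * (2 * (k:ℝ) ^ 2) ^ (2 * C)
        ≤ (2 * (k:ℝ)) ^ (2 * k ^ 2) := by
      have := (Nat.cast_le (α := ℝ)).mpr hnat
      push_cast at this
      rw [hM_def]
      convert this using 2 <;> push_cast <;> ring
    have hβ2 : β ^ 2 = ((16:ℝ) ^ (4 * (k + 1)))⁻¹ * ((2 * (k:ℝ) ^ 2) ^ (2 * C))⁻¹ := by
      rw [hβ_def, ← inv_pow, ← inv_pow]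
      ring
    have hD1 : (0:ℝ) < 16 ^ (4 * (k + 1)) := by positivity
    have hD2 : (0:ℝ) < (2 * (k:ℝ) ^ 2) ^ (2 * C) := by positivity
    have hpow : (0:ℝ) < (2 * (k:ℝ)) ^ (2 * k ^ 2) := by positivity
    calc 4 * (k:ℝ) * M ^ 2 * h ≤ 4 * (k:ℝ) * M ^ 2 * ((2 * (k:ℝ)) ^ (2 * k ^ 2))⁻¹ := by
          have h4 : (0:ℝ) ≤ 4 * (k:ℝ) * M ^ 2 := by positivity
          exact mul_le_mul_of_nonneg_left hhle h4
      _ ≤ β ^ 2 := by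
          rw [hβ2, ← mul_inv, ← div_eq_mul_inv, ← one_div,
            div_le_div_iff₀ hpow (by positivity)]
          nlinarith [hreal]
  have hb_lb : β ≤ b := by
    rw [hβ_def, hb_def, hC_def]
    exact det_heat2_ge hk1
  have hb_pos : 0 < b := lt_of_lt_of_le hβpos hb_lb
  have hs_abs : ∀ s ∈ S, ∀ j, |s j| ≤ h := by
    intro s hs j
    rw [hS_def, Set.mem_Icc] at hs
    exact abs_le.mpr ⟨hs.1 j, hs.2 j⟩
  have hMh : ((k + 1).factorial : ℝ) * (((k + 1 : ℕ) : ℝ) * h) = M * h := by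
    rw [hM_def]; push_cast; ring
  have hent1 : ∀ (t : ℝ), 1 ≤ t → ∀ u v : ℝ, |heatK t u v| ≤ 1 := fun t ht u v => by
    rw [abs_of_nonneg (heatK_nonneg t u v)]; exact heatK_le_one ht u v
  have hFa : ∀ s ∈ S, |F s - a| ≤ M * h := by
    intro s hs
    rw [hF_def, ha_def]
    have key := abs_det_sub_det_le
      (Matrix.of fun i j : Fin (k + 1) => heatK 1 (y i) (xPt k j + s j))
      (Matrix.of fun i j : Fin (k + 1) => heatK 1 (y i) (xPt k j))
      (fun i j => hent1 1 le_rfl _ _) (fun i j => hent1 1 le_rfl _ _) h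
      (fun i j => by
        simp only [Matrix.of_apply]
        have h1 := heatK_lipschitz (le_refl (1:ℝ)) (y i) (xPt k j + s j) (xPt k j)
        have h2 : |xPt k j + s j - xPt k j| = |s j| := by congr 1; ring
        rw [h2] at h1
        exact le_trans h1 (hs_abs s hs j))
    dsimp only
    rw [← hMh]
    exact key
  have hGb : ∀ s ∈ S, |G s - b| ≤ M * h := by
    intro s hs
    rw [hG_def, hb_def]
    have key := abs_det_sub_det_le
      (Matrix.of fun i j : Fin (k + 1) => heatK 2 (xPt k i) (xPt k j + s j))
      (Matrix.of fun i j : Fin (k + 1) => heatK 2 (xPt k i) (xPt k j))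
      (fun i j => hent1 2 (by norm_num) _ _) (fun i j => hent1 2 (by norm_num) _ _) h
      (fun i j => by
        simp only [Matrix.of_apply]
        have h1 := heatK_lipschitz (by norm_num : (1:ℝ) ≤ 2) (xPt k i) (xPt k j + s j) (xPt k j)
        have h2 : |xPt k j + s j - xPt k j| = |s j| := by congr 1; ring
        rw [h2] at h1
        exact le_trans h1 (hs_abs s hs j))
    dsimp only
    rw [← hMh]
    exact key
  have habs_a : |a| ≤ M := by
    rw [ha_def]
    have key := abs_det_sub_det_le
      (Matrix.of fun i j : Fin (k + 1) => heatK 1 (y i) (xPt k j))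
      (0 : Matrix (Fin (k + 1)) (Fin (k + 1)) ℝ)
      (fun i j => hent1 1 le_rfl _ _) (fun i j => by norm_num) 1
      (fun i j => by simpa using hent1 1 le_rfl (y i) (xPt k j))
    rw [Matrix.det_zero, sub_zero] at key
    calc |(Matrix.of fun i j : Fin (k + 1) => heatK 1 (y i) (xPt k j)).det|
        ≤ ((k + 1).factorial : ℝ) * (((k + 1 : ℕ) : ℝ) * 1) := key
      _ = M := by rw [hM_def]; push_cast; ring
  have habs_b : |b| ≤ M := by
    rw [hb_def]
    have key := abs_det_sub_det_le
      (Matrix.of fun i j : Fin (k + 1) => heatK 2 (xPt k i) (xPt k j))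
      (0 : Matrix (Fin (k + 1)) (Fin (k + 1)) ℝ)
      (fun i j => hent1 2 (by norm_num) _ _) (fun i j => by norm_num) 1
      (fun i j => by simpa using hent1 2 (by norm_num) (xPt k i) (xPt k j))
    rw [Matrix.det_zero, sub_zero] at key
    calc |(Matrix.of fun i j : Fin (k + 1) => heatK 2 (xPt k i) (xPt k j)).det|
        ≤ ((k + 1).factorial : ℝ) * (((k + 1 : ℕ) : ℝ) * 1) := key
      _ = M := by rw [hM_def]; push_cast; ring
  -- measure-theoretic facts
  have hle : (fun _ : Fin (k + 1) => -h) ≤ (fun _ : Fin (k + 1) => h) := fun i => by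
    dsimp; linarith
  have hcomp : IsCompact S := by rw [hS_def]; exact isCompact_Icc
  have hμS : volume S < ⊤ := hcomp.measure_lt_top
  have hmeas : MeasurableSet S := by rw [hS_def]; exact measurableSet_Icc
  set V : ℝ := (volume S).toReal with hV_def
  clear_value V
  have hV : V = (2 * h) ^ (k + 1) := by
    rw [hV_def, hS_def, Real.volume_Icc_pi_toReal hle]
    rw [Finset.prod_const, Finset.card_univ, Fintype.card_fin]
    congr 1
    ring
  have hVpos : 0 < V := by rw [hV]; positivity
  have hFcont : Continuous F := by
    rw [hF_def]
    exact Continuous.matrix_det (continuous_matrix fun i j =>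
      (heatK_continuous 1 (y i)).comp (continuous_const.add (continuous_apply j)))
  have hGcont : Continuous G := by
    rw [hG_def]
    exact Continuous.matrix_det (continuous_matrix fun i j =>
      (heatK_continuous 2 (xPt k i)).comp (continuous_const.add (continuous_apply j)))
  have hFint : IntegrableOn F S := hFcont.continuousOn.integrableOn_compact hcomp
  have hGint : IntegrableOn G S := hGcont.continuousOn.integrableOn_compact hcomp
  have haint : IntegrableOn (fun _ : Fin (k + 1) → ℝ => a) S volume :=
    integrableOn_const hμS.ne
  have hbint : IntegrableOn (fun _ : Fin (k + 1) → ℝ => b) S volume :=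
    integrableOn_const hμS.ne
  set P : ℝ := ∫ s in S, F s with hP_def
  set Q : ℝ := ∫ s in S, G s with hQ_def
  clear_value P Q
  have hPa : |P - V * a| ≤ V * (M * h) := by
    have h1 : ∫ s in S, (F s - a) = P - V * a := by
      rw [integral_sub hFint haint, setIntegral_const, smul_eq_mul, ← hP_def, measureReal_def, ← hV_def]
    have h2 := norm_setIntegral_le_of_norm_le_const (μ := volume) (s := S)
      (f := fun s => F s - a) (C := M * h) hμS
      (fun s hs => by rw [Real.norm_eq_abs]; exact hFa s hs)
    rw [h1, Real.norm_eq_abs, measureReal_def, ← hV_def] at h2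
    calc |P - V * a| ≤ (M * h) * V := h2
      _ = V * (M * h) := by ring
  have hQb : |Q - V * b| ≤ V * (M * h) := by
    have h1 : ∫ s in S, (G s - b) = Q - V * b := by
      rw [integral_sub hGint hbint, setIntegral_const, smul_eq_mul, ← hQ_def, measureReal_def, ← hV_def]
    have h2 := norm_setIntegral_le_of_norm_le_const (μ := volume) (s := S)
      (f := fun s => G s - b) (C := M * h) hμS
      (fun s hs => by rw [Real.norm_eq_abs]; exact hGb s hs)
    rw [h1, Real.norm_eq_abs, measureReal_def, ← hV_def] at h2
    calc |Q - V * b| ≤ (M * h) * V := h2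
      _ = V * (M * h) := by ring
  -- smallness of the perturbation
  have hηβ : M * h ≤ β / 2 := by
    have h1 : 4 * (M * h) ≤ 4 * (k:ℝ) * M ^ 2 * h := by
      have e1 : (1:ℝ) ≤ (k:ℝ) * M := by
        calc (1:ℝ) = 1 * 1 := by norm_num
          _ ≤ (k:ℝ) * M := mul_le_mul (by linarith) hM1 (by norm_num) (by positivity)
      have e2 : 0 ≤ ((k:ℝ) * M - 1) * (M * h) :=
        mul_nonneg (by linarith) (by positivity)
      nlinarith [e2]
    have h2 : β ^ 2 ≤ β := by nlinarith [hβpos, hβ1]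
    linarith [hmaster]
  have hQ_lb : V * (β / 2) ≤ Q := by
    have h1 : Q - V * b ≥ -(V * (M * h)) := by
      have := abs_le.mp hQb
      linarith [this.1]
    have h2 : V * b ≥ V * β := by
      apply mul_le_mul_of_nonneg_left hb_lb hVpos.le
    nlinarith [hVpos, hηβ]
  have hQpos : 0 < Q := lt_of_lt_of_le (by positivity) hQ_lb
  -- final computation
  rw [div_sub_div a P hb_pos.ne' hQpos.ne', abs_div]
  have hnum : |a * Q - b * P| ≤ 2 * M * V * (M * h) := by
    have h1 : a * Q - b * P = a * (Q - V * b) - b * (P - V * a) := by ring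
    rw [h1]
    calc |a * (Q - V * b) - b * (P - V * a)|
        ≤ |a * (Q - V * b)| + |b * (P - V * a)| := abs_sub _ _
      _ = |a| * |Q - V * b| + |b| * |P - V * a| := by rw [abs_mul, abs_mul]
      _ ≤ M * (V * (M * h)) + M * (V * (M * h)) := by
          apply add_le_add
          · exact mul_le_mul habs_a hQb (abs_nonneg _) (le_trans (abs_nonneg a) habs_a)
          · exact mul_le_mul habs_b hPa (abs_nonneg _) (le_trans (abs_nonneg b) habs_b)
      _ = 2 * M * V * (M * h) := by ring
  have hden : β * (V * (β / 2)) ≤ |b * Q| := by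
    rw [abs_mul, abs_of_pos hb_pos, abs_of_pos hQpos]
    apply mul_le_mul hb_lb hQ_lb (by positivity) hb_pos.le
  calc |a * Q - b * P| / |b * Q|
      ≤ (2 * M * V * (M * h)) / (β * (V * (β / 2))) :=
        div_le_div₀ (by positivity) hnum (by positivity) hden
    _ = 4 * M ^ 2 * h / β ^ 2 := by
        field_simp
        ring
    _ ≤ 1 / (k:ℝ) := by
        rw [div_le_div_iff₀ (by positivity) hk0]
        nlinarith [hmaster]
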